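/- arXiv:1605.08848 — 2 statements merged into one kernel-verified Lean document; each statement's English description precedes it below -/
import Mathlib

section
/- Let L > 0, ν ≥ 0, r ∈ ℝ³ with ‖r‖₂ = 1, and let k > 2νL². Let m : [0,∞) × [0,L] → ℝ³ be twice continuously differentiable in (t,x), satisfy ∂m/∂t = m × m_xx − ν m × (m × m_xx) + k(r − m) on [0,∞) × [0,L] with Neumann boundary conditions m_x(t,0) = m_x(t,L) = 0. Then for all t ≥ 0, ∫₀ᴸ ‖m_x(t,x)‖₂² dx + ∫₀ᴸ ‖m(t,x) − r‖₂² dx ≤ e^{−2(k − 2νL²)t} ( ∫₀ᴸ ‖m_x(0,x)‖₂² dx + ∫₀ᴸ ‖m(0,x) − r‖₂² dx ); i.e. ‖m(·,t) − r‖_{H¹}² ≤ e^{−2(k − 2νL²)t} ‖m(·,0) − r‖_{H¹}². (The paper's Theorem 3.8: global exponential stability of r in the H¹-norm under proportional control; the paper states the threshold as k > 8νL⁴.) -/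
local notation "E3" => EuclideanSpace ℝ (Fin 3)
open scoped RealInnerProductSpace
open MeasureTheory intervalIntegral



/-- Cross product on `ℝ³ = EuclideanSpace ℝ (Fin 3)`. -/
noncomputable def cross3 (u v : EuclideanSpace ℝ (Fin 3)) : EuclideanSpace ℝ (Fin 3) :=
  (WithLp.equiv 2 (Fin 3 → ℝ)).symm
    ![u 1 * v 2 - u 2 * v 1, u 2 * v 0 - u 0 * v 2, u 0 * v 1 - u 1 * v 0]

lemma cross3_apply (u v : E3) (i : Fin 3) :
    cross3 u v i = ![u 1 * v 2 - u 2 * v 1, u 2 * v 0 - u 0 * v 2, u 0 * v 1 - u 1 * v 0] i := by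
  simp [cross3]

lemma inner3 (u v : E3) : ⟪u, v⟫ = u 0 * v 0 + u 1 * v 1 + u 2 * v 2 := by
  simp [PiLp.inner_apply, Fin.sum_univ_three, RCLike.inner_apply, conj_trivial]; ring

lemma norm3 (u : E3) : ‖u‖ ^ 2 = u 0 * u 0 + u 1 * u 1 + u 2 * u 2 := by
  rw [← real_inner_self_eq_norm_sq, inner3]

lemma cross3_self (u : E3) : cross3 u u = 0 := by
  refine PiLp.ext fun i => ?_
  fin_cases i <;> simp [cross3_apply] <;> ring

lemma cross3_zero_right (u : E3) : cross3 u 0 = 0 := by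
  refine PiLp.ext fun i => ?_
  fin_cases i <;> simp [cross3_apply]

-- coordinate simp set for sub, smul, add on E3
lemma sub3 (u v : E3) (i : Fin 3) : (u - v) i = u i - v i := rfl
lemma add3 (u v : E3) (i : Fin 3) : (u + v) i = u i + v i := rfl
lemma smul3 (a : ℝ) (u : E3) (i : Fin 3) : (a • u) i = a * u i := rfl
lemma zero3 (i : Fin 3) : (0 : E3) i = 0 := rfl

-- main pointwise identity
lemma Pident (ν k : ℝ) (a w c : E3) :
    ⟪cross3 a w - ν • cross3 a (cross3 a w) + k • (c - a), (a - c) - w⟫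
      = -⟪cross3 a w, c⟫ - ν * ‖cross3 a w‖ ^ 2
        + ν * (⟪a, w⟫ * ⟪a, c⟫ - ‖a‖ ^ 2 * ⟪w, c⟫)
        - k * ‖a - c‖ ^ 2 + k * ⟪a - c, w⟫ := by
  simp only [inner3, norm3, cross3_apply, sub3, add3, smul3,
    Matrix.cons_val_zero, Matrix.cons_val_one, Matrix.head_cons,
    Matrix.cons_val_two, Matrix.tail_cons]
  ring

lemma lagrange (a u c : E3) :
    ⟪a, u⟫ * ⟪u, c⟫ - ⟪u, u⟫ * ⟪a, c⟫ = -⟪cross3 a u, cross3 c u⟫ := by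
  simp only [inner3, cross3_apply, Matrix.cons_val_zero, Matrix.cons_val_one, Matrix.head_cons,
    Matrix.cons_val_two, Matrix.tail_cons]
  ring

lemma cross3_norm_le (u v : E3) : ‖cross3 u v‖ ≤ ‖u‖ * ‖v‖ := by
  have h : ‖cross3 u v‖ ^ 2 + ⟪u, v⟫ ^ 2 = (‖u‖ * ‖v‖) ^ 2 := by
    have h1 := norm3 (cross3 u v)
    have h2 := inner3 u v
    have h3 : (‖u‖ * ‖v‖) ^ 2 = ‖u‖ ^ 2 * ‖v‖ ^ 2 := by ring
    rw [h1, h2, h3, norm3, norm3]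
    simp only [cross3_apply, Matrix.cons_val_zero, Matrix.cons_val_one, Matrix.head_cons,
      Matrix.cons_val_two, Matrix.tail_cons]
    ring
  nlinarith [norm_nonneg (cross3 u v), mul_nonneg (norm_nonneg u) (norm_nonneg v), sq_nonneg (⟪u, v⟫)]

lemma inner_self3 (u : E3) : ⟪u, u⟫ = ‖u‖ ^ 2 := real_inner_self_eq_norm_sq u

lemma hasDerivAt_param_integral {F φ : ℝ → ℝ → ℝ} {a b t₀ : ℝ}
    (hF : Continuous (fun p : ℝ × ℝ => F p.1 p.2))
    (hφ : Continuous (fun p : ℝ × ℝ => φ p.1 p.2))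
    (hd : ∀ s x : ℝ, HasDerivAt (fun u => F u x) (φ s x) s) :
    HasDerivAt (fun s => ∫ x in a..b, F s x) (∫ x in a..b, φ t₀ x) t₀ := by
  obtain ⟨C, hC⟩ : ∃ C, ∀ p ∈ Set.Icc (t₀ - 1) (t₀ + 1) ×ˢ Set.uIcc a b, ‖φ p.1 p.2‖ ≤ C :=
    (((isCompact_Icc (a := t₀ - 1) (b := t₀ + 1)).prod
        (isCompact_uIcc (a := a) (b := b))).exists_bound_of_continuousOn hφ.continuousOn)
  have h := intervalIntegral.hasDerivAt_integral_of_dominated_loc_of_deriv_le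
    (F := F) (F' := φ) (x₀ := t₀) (a := a) (b := b) (μ := volume)
    (bound := fun _ => C) (Metric.ball_mem_nhds t₀ one_pos)
    (Filter.Eventually.of_forall fun s =>
      (hF.comp (continuous_const.prodMk continuous_id)).aestronglyMeasurable)
    ((hF.comp (continuous_const.prodMk continuous_id)).intervalIntegrable _ _)
    ((hφ.comp (continuous_const.prodMk continuous_id)).aestronglyMeasurable)
    (Filter.Eventually.of_forall fun x hx s hs => by
      have hs' : |s - t₀| < 1 := by simpa [Real.dist_eq] using Metric.mem_ball.1 hs
      have h1 := abs_lt.1 hs'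
      exact hC (s, x) ⟨⟨by linarith [h1.1], by linarith [h1.2]⟩, Set.uIoc_subset_uIcc hx⟩)
    intervalIntegrable_const
    (Filter.Eventually.of_forall fun x _ s _ => hd s x)
  exact h.2

lemma integral_sq_cs {f : ℝ → ℝ} {L : ℝ} (hL : 0 < L) (hf : Continuous f) :
    (∫ x in (0:ℝ)..L, f x) ^ 2 ≤ L * ∫ x in (0:ℝ)..L, (f x) ^ 2 := by
  set A := ∫ x in (0:ℝ)..L, f x with hA
  set I := ∫ x in (0:ℝ)..L, (f x) ^ 2 with hI
  have h0c : ∀ c : ℝ, 0 ≤ I - 2 * c * A + c ^ 2 * L := by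
    intro c
    have h0 : (0:ℝ) ≤ ∫ x in (0:ℝ)..L, (f x - c) ^ 2 :=
      intervalIntegral.integral_nonneg (le_of_lt hL) (fun x _ => sq_nonneg _)
    have h1 : ∀ x : ℝ, (f x - c) ^ 2 = (f x) ^ 2 - (2 * c) * f x + c ^ 2 := fun x => by ring
    rw [show (fun x => (f x - c)^2) = fun x => (f x)^2 - (2*c)*f x + c^2 from funext h1,
      intervalIntegral.integral_add, intervalIntegral.integral_sub,
      intervalIntegral.integral_const_mul, intervalIntegral.integral_const] at h0
    · simp only [smul_eq_mul] at h0
      nlinarith [h0]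
    · exact (hf.pow 2).intervalIntegrable _ _
    · exact (continuous_const.mul hf).intervalIntegrable _ _
    · exact ((hf.pow 2).intervalIntegrable _ _).sub
        ((continuous_const.mul hf).intervalIntegrable _ _)
    · exact intervalIntegrable_const
  have h := h0c (A / L)
  have e1 : (A / L) ^ 2 * L = A ^ 2 / L := by field_simp
  have e2 : 2 * (A / L) * A = 2 * (A ^ 2 / L) := by ring
  rw [e1, e2] at h
  have h2 : A ^ 2 / L ≤ I := by linarith
  calc A ^ 2 = (A ^ 2 / L) * L := by field_simp
    _ ≤ I * L := mul_le_mul_of_nonneg_right h2 hL.le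
    _ = L * I := mul_comm _ _

-- coordinate HasDerivAt from vector one
lemma HasDerivAt.coord {f : ℝ → E3} {f' : E3} {x : ℝ} (hf : HasDerivAt f f' x) (i : Fin 3) :
    HasDerivAt (fun y => f y i) (f' i) x := by
  have := ((EuclideanSpace.proj (𝕜 := ℝ) i).hasFDerivAt (x := f x)).comp_hasDerivAt x hf
  exact this

lemma HasDerivAt.cross3' {f g : ℝ → E3} {f' g' : E3} {x : ℝ}
    (hf : HasDerivAt f f' x) (hg : HasDerivAt g g' x) :
    HasDerivAt (fun y => cross3 (f y) (g y)) (cross3 f' (g x) + cross3 (f x) g') x := by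
  have h : ∀ i : Fin 3, HasDerivAt (fun y => cross3 (f y) (g y) i)
      ((cross3 f' (g x) + cross3 (f x) g') i) x := by
    intro i
    fin_cases i <;>
    · simp only [cross3_apply, Fin.isValue]
      simp only [Matrix.cons_val_zero, Matrix.cons_val_one, Matrix.head_cons,
        Matrix.cons_val_two, Matrix.tail_cons, PiLp.add_apply]
      refine (((hf.coord _).mul (hg.coord _)).sub ((hf.coord _).mul (hg.coord _))).congr_deriv ?_
      simp [cross3_apply]; ring
  -- assemble
  have h2 : HasDerivAt (fun y => (fun i => cross3 (f y) (g y) i : Fin 3 → ℝ))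
      (fun i => (cross3 f' (g x) + cross3 (f x) g') i) x := hasDerivAt_pi.2 h
  exact ((EuclideanSpace.equiv (Fin 3) ℝ).symm.hasFDerivAt.comp_hasDerivAt x h2 :)

lemma Continuous.cross3' {α : Type*} [TopologicalSpace α] {f g : α → E3}
    (hf : Continuous f) (hg : Continuous g) : Continuous (fun y => cross3 (f y) (g y)) := by
  have h : Continuous (fun y => (fun i => cross3 (f y) (g y) i : Fin 3 → ℝ)) := by
    apply continuous_pi
    intro i
    have hfc : ∀ j, Continuous fun y => f y j := fun j => (EuclideanSpace.proj j).continuous.comp hf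
    have hgc : ∀ j, Continuous fun y => g y j := fun j => (EuclideanSpace.proj j).continuous.comp hg
    fin_cases i <;> simp only [cross3_apply, Matrix.cons_val_zero, Matrix.cons_val_one,
      Matrix.head_cons, Matrix.cons_val_two, Matrix.tail_cons] <;>
      exact ((hfc _).mul (hgc _)).sub ((hfc _).mul (hgc _))
  exact ((EuclideanSpace.equiv (Fin 3) ℝ).symm.continuous.comp h :)


set_option maxHeartbeats 2000000

/-- Second spatial derivative `m_xx` of `m(t, x)`. -/
noncomputable def mxx (m : ℝ → ℝ → EuclideanSpace ℝ (Fin 3)) (t x : ℝ) :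
    EuclideanSpace ℝ (Fin 3) :=
  deriv (deriv (m t)) x

/-- Theorem 3.8: For `k > 2νL²`, along C² solutions of the controlled
Landau–Lifshitz equation `∂m/∂t = m × m_xx − ν m × (m × m_xx) + k(r − m)` with Neumann
boundary conditions on `[0, L]` and `‖r‖ = 1`, the H¹-distance to `r` decays
exponentially:
`∫₀ᴸ ‖m_x(t)‖² + ∫₀ᴸ ‖m(t) − r‖² ≤ e^{−2(k−2νL²)t} (∫₀ᴸ ‖m_x(0)‖² + ∫₀ᴸ ‖m(0) − r‖²)`. -/
theorem controlled_landau_lifshitz_H1_exponential_stability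
    (L ν k : ℝ) (hL : 0 < L) (hν : 0 ≤ ν)
    (r : EuclideanSpace ℝ (Fin 3)) (hr : ‖r‖ = 1)
    (hk : 2 * ν * L ^ 2 < k)
    (m : ℝ → ℝ → EuclideanSpace ℝ (Fin 3))
    (hsmooth : ContDiff ℝ 2 (fun p : ℝ × ℝ => m p.1 p.2))
    (hpde : ∀ t x : ℝ, 0 ≤ t → x ∈ Set.Icc (0 : ℝ) L →
      deriv (fun s => m s x) t
        = cross3 (m t x) (mxx m t x)
          - ν • cross3 (m t x) (cross3 (m t x) (mxx m t x))
          + k • (r - m t x))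
    (hbc : ∀ t : ℝ, 0 ≤ t → deriv (m t) 0 = 0 ∧ deriv (m t) L = 0) :
    ∀ t : ℝ, 0 ≤ t →
      (∫ x in (0 : ℝ)..L, ‖deriv (m t) x‖ ^ 2) + (∫ x in (0 : ℝ)..L, ‖m t x - r‖ ^ 2)
        ≤ Real.exp (-2 * (k - 2 * ν * L ^ 2) * t)
          * ((∫ x in (0 : ℝ)..L, ‖deriv (m 0) x‖ ^ 2)
            + ∫ x in (0 : ℝ)..L, ‖m 0 x - r‖ ^ 2) := by
  have hL0 : (0 : ℝ) ≤ L := hL.le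
  set c : ℝ := k - 2 * ν * L ^ 2 with hcdef
  -- partial derivative infrastructure
  set G : ℝ × ℝ → (ℝ × ℝ) →L[ℝ] EuclideanSpace ℝ (Fin 3) :=
    fderiv ℝ (fun p : ℝ × ℝ => m p.1 p.2) with hGdef
  have hG : ContDiff ℝ 1 G := hsmooth.fderiv_right (le_refl _)
  have hGv : ∀ v : ℝ × ℝ, ContDiff ℝ 1 (fun p => G p v) :=
    fun v => hG.clm_apply contDiff_const
  set Mx : ℝ → ℝ → E3 := fun t x => G (t, x) (0, 1) with hMxdef
  set Mt : ℝ → ℝ → E3 := fun t x => G (t, x) (1, 0) with hMtdef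
  set Mxx : ℝ → ℝ → E3 := fun t x => fderiv ℝ (fun p => G p ((0:ℝ), (1:ℝ))) (t, x) (0, 1)
    with hMxxdef
  set Mtx : ℝ → ℝ → E3 := fun t x => fderiv ℝ (fun p => G p ((0:ℝ), (1:ℝ))) (t, x) (1, 0)
    with hMtxdef
  set Mxt : ℝ → ℝ → E3 := fun t x => fderiv ℝ (fun p => G p ((1:ℝ), (0:ℝ))) (t, x) (0, 1)
    with hMxtdef
  have hline_x : ∀ t x : ℝ, HasDerivAt (fun y : ℝ => ((t, y) : ℝ × ℝ)) (0, 1) x :=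
    fun t x => (hasDerivAt_const x t).prodMk (hasDerivAt_id x)
  have hline_t : ∀ t x : ℝ, HasDerivAt (fun s : ℝ => ((s, x) : ℝ × ℝ)) (1, 0) t :=
    fun t x => (hasDerivAt_id t).prodMk (hasDerivAt_const t x)
  have hmx : ∀ t x : ℝ, HasDerivAt (m t) (Mx t x) x := by
    intro t x
    exact ((hsmooth.differentiable (by norm_num) (t, x)).hasFDerivAt).comp_hasDerivAt x
      (hline_x t x)
  have hderiv : ∀ t x : ℝ, deriv (m t) x = Mx t x := fun t x => (hmx t x).deriv
  have hmt : ∀ t x : ℝ, HasDerivAt (fun s => m s x) (Mt t x) t := by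
    intro t x
    exact ((hsmooth.differentiable (by norm_num) (t, x)).hasFDerivAt).comp_hasDerivAt t
      (hline_t t x)
  have hmxx : ∀ t x : ℝ, HasDerivAt (fun y => Mx t y) (Mxx t x) x := by
    intro t x
    exact (((hGv (0, 1)).differentiable one_ne_zero (t, x)).hasFDerivAt).comp_hasDerivAt x
      (hline_x t x)
  have hmxxeq : ∀ t x : ℝ, mxx m t x = Mxx t x := by
    intro t x
    have h1 : deriv (m t) = fun y => Mx t y := funext (hderiv t)
    rw [mxx, h1]
    exact (hmxx t x).deriv
  have hmtx : ∀ t x : ℝ, HasDerivAt (fun s => Mx s x) (Mtx t x) t := by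
    intro t x
    exact (((hGv (0, 1)).differentiable one_ne_zero (t, x)).hasFDerivAt).comp_hasDerivAt t
      (hline_t t x)
  have hmxt : ∀ t x : ℝ, HasDerivAt (fun y => Mt t y) (Mxt t x) x := by
    intro t x
    exact (((hGv (1, 0)).differentiable one_ne_zero (t, x)).hasFDerivAt).comp_hasDerivAt x
      (hline_x t x)
  have hsymm : ∀ t x : ℝ, Mtx t x = Mxt t x := by
    intro t x
    have hflip : ∀ (v w : ℝ × ℝ),
        fderiv ℝ (fun p => G p v) (t, x) w = fderiv ℝ G (t, x) w v := by
      intro v w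
      have hd : DifferentiableAt ℝ G (t, x) := hG.differentiable one_ne_zero (t, x)
      have h2 : fderiv ℝ (fun p => G p v) (t, x)
          = (G (t, x)).comp (fderiv ℝ (fun _ : ℝ × ℝ => v) (t, x))
            + (fderiv ℝ G (t, x)).flip v := fderiv_clm_apply hd (differentiableAt_const v)
      rw [h2]; simp
    show (fderiv ℝ (fun p => G p ((0:ℝ), (1:ℝ))) (t, x)) (1, 0)
        = (fderiv ℝ (fun p => G p ((1:ℝ), (0:ℝ))) (t, x)) (0, 1)
    rw [hflip, hflip]
    exact (hsmooth.contDiffAt.isSymmSndFDerivAt (by simp [minSmoothness_of_isRCLikeNormedField])) _ _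
  -- continuity
  have cm : Continuous (fun p : ℝ × ℝ => m p.1 p.2) := hsmooth.continuous
  have cMx : Continuous (fun p : ℝ × ℝ => Mx p.1 p.2) := by
    have := (hGv (0, 1)).continuous
    exact this.comp continuous_id
  have cMt : Continuous (fun p : ℝ × ℝ => Mt p.1 p.2) := by
    have := (hGv (1, 0)).continuous
    exact this.comp continuous_id
  have cMxx : Continuous (fun p : ℝ × ℝ => Mxx p.1 p.2) := by
    have h1 : Continuous (fderiv ℝ (fun p => G p ((0:ℝ), (1:ℝ)))) :=
      (hGv (0, 1)).continuous_fderiv one_ne_zero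
    exact ((ContinuousLinearMap.apply ℝ (EuclideanSpace ℝ (Fin 3)) ((0:ℝ), (1:ℝ))).continuous.comp
      h1).comp continuous_id
  have cMtx : Continuous (fun p : ℝ × ℝ => Mtx p.1 p.2) := by
    have h1 : Continuous (fderiv ℝ (fun p => G p ((0:ℝ), (1:ℝ)))) :=
      (hGv (0, 1)).continuous_fderiv one_ne_zero
    exact ((ContinuousLinearMap.apply ℝ (EuclideanSpace ℝ (Fin 3)) ((1:ℝ), (0:ℝ))).continuous.comp
      h1).comp continuous_id
  have cMxt : Continuous (fun p : ℝ × ℝ => Mxt p.1 p.2) := by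
    have h1 : Continuous (fderiv ℝ (fun p => G p ((1:ℝ), (0:ℝ)))) :=
      (hGv (1, 0)).continuous_fderiv one_ne_zero
    exact ((ContinuousLinearMap.apply ℝ (EuclideanSpace ℝ (Fin 3)) ((0:ℝ), (1:ℝ))).continuous.comp
      h1).comp continuous_id
  -- energy
  set E1 : ℝ → ℝ := fun t => ∫ x in (0:ℝ)..L, ‖Mx t x‖ ^ 2 with hE1def
  set E2 : ℝ → ℝ := fun t => ∫ x in (0:ℝ)..L, ‖m t x - r‖ ^ 2 with hE2def
  set EE : ℝ → ℝ := fun t => E1 t + E2 t with hEEdef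
  -- derivative of squared norms
  have dnorm : ∀ (f : ℝ → E3) (f' : E3) (s : ℝ), HasDerivAt f f' s →
      HasDerivAt (fun u => ‖f u‖ ^ 2) (2 * ⟪f', f s⟫) s := by
    intro f f' s hf
    have h := HasDerivAt.inner (𝕜 := ℝ) hf hf
    have heq : (fun u => ‖f u‖ ^ 2) = fun u => ⟪f u, f u⟫ :=
      funext fun u => (inner_self3 _).symm
    rw [heq]
    refine h.congr_deriv ?_
    rw [real_inner_comm]; ring
  -- derivative of the energy
  have hEE' : ∀ t : ℝ, HasDerivAt EE
      ((∫ x in (0:ℝ)..L, 2 * ⟪Mtx t x, Mx t x⟫) + ∫ x in (0:ℝ)..L, 2 * ⟪Mt t x, m t x - r⟫) t := by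
    intro t
    have h1 : HasDerivAt E1 (∫ x in (0:ℝ)..L, 2 * ⟪Mtx t x, Mx t x⟫) t := by
      apply hasDerivAt_param_integral (F := fun s x => ‖Mx s x‖ ^ 2)
        (φ := fun s x => 2 * ⟪Mtx s x, Mx s x⟫)
      · exact (cMx.norm).pow 2
      · exact continuous_const.mul (cMtx.inner cMx)
      · intro s x
        exact dnorm _ _ _ (hmtx s x)
    have h2 : HasDerivAt E2 (∫ x in (0:ℝ)..L, 2 * ⟪Mt t x, m t x - r⟫) t := by
      apply hasDerivAt_param_integral (F := fun s x => ‖m s x - r‖ ^ 2)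
        (φ := fun s x => 2 * ⟪Mt s x, m s x - r⟫)
      · exact ((cm.sub continuous_const).norm).pow 2
      · exact continuous_const.mul (cMt.inner (cm.sub continuous_const))
      · intro s x
        exact dnorm _ _ _ ((hmt s x).sub_const r)
    exact h1.add h2
  -- the key differential inequality
  have hkey : ∀ t : ℝ, 0 ≤ t →
      ((∫ x in (0:ℝ)..L, 2 * ⟪Mtx t x, Mx t x⟫) + ∫ x in (0:ℝ)..L, 2 * ⟪Mt t x, m t x - r⟫)
        ≤ -2 * c * EE t := by
    intro t ht
    have hpr : Continuous (fun x : ℝ => ((t, x) : ℝ × ℝ)) :=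
      continuous_const.prodMk continuous_id
    have ca : Continuous (fun x => m t x) := cm.comp hpr
    have cu : Continuous (fun x => Mx t x) := cMx.comp hpr
    have cw : Continuous (fun x => Mxx t x) := cMxx.comp hpr
    have cmt : Continuous (fun x => Mt t x) := cMt.comp hpr
    have cmxt : Continuous (fun x => Mxt t x) := cMxt.comp hpr
    have cmtx : Continuous (fun x => Mtx t x) := cMtx.comp hpr
    have hMx0 : Mx t 0 = 0 := by rw [← hderiv]; exact (hbc t ht).1
    have hMxL : Mx t L = 0 := by rw [← hderiv]; exact (hbc t ht).2
    have huIcc : Set.uIcc (0:ℝ) L = Set.Icc 0 L := Set.uIcc_of_le hL0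
    -- named integrals
    set J : ℝ := ∫ x in (0:ℝ)..L, ‖cross3 (m t x) (Mxx t x)‖ ^ 2 with hJdef
    set A : ℝ := ∫ x in (0:ℝ)..L, ‖cross3 (m t x) (Mxx t x)‖ with hAdef
    set I1 : ℝ := ∫ x in (0:ℝ)..L, ‖Mx t x‖ ^ 2 with hI1def
    set I2 : ℝ := ∫ x in (0:ℝ)..L, ‖m t x - r‖ ^ 2 with hI2def
    have ccr : Continuous (fun x => cross3 (m t x) (Mxx t x)) := ca.cross3' cw
    have ccru : Continuous (fun x => cross3 (m t x) (Mx t x)) := ca.cross3' cu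
    have hJ0 : 0 ≤ J := intervalIntegral.integral_nonneg hL0 (fun x _ => sq_nonneg _)
    have hI10 : 0 ≤ I1 := intervalIntegral.integral_nonneg hL0 (fun x _ => sq_nonneg _)
    have hI20 : 0 ≤ I2 := intervalIntegral.integral_nonneg hL0 (fun x _ => sq_nonneg _)
    -- IBP 1 : ∫ (⟪Mt, Mxx⟫ + ⟪Mxt, Mx⟫) = 0
    have ibp1 : (∫ x in (0:ℝ)..L, (⟪Mt t x, Mxx t x⟫ + ⟪Mxt t x, Mx t x⟫)) = 0 := by
      rw [integral_eq_sub_of_hasDerivAt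
        (f := fun y => ⟪Mt t y, Mx t y⟫)
        (fun x _ => HasDerivAt.inner (𝕜 := ℝ) (hmxt t x) (hmxx t x))
        (((cmt.inner cw).add (cmxt.inner cu)).intervalIntegrable _ _)]
      rw [hMx0, hMxL, inner_zero_right, inner_zero_right, sub_zero]
    -- IBP 2 : ∫ ⟪cross3 m Mxx, r⟫ = 0
    have ibp2 : (∫ x in (0:ℝ)..L, ⟪cross3 (m t x) (Mxx t x), r⟫) = 0 := by
      have hq : ∀ x ∈ Set.uIcc (0:ℝ) L, HasDerivAt (fun y => ⟪cross3 (m t y) (Mx t y), r⟫)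
          (⟪cross3 (m t x) (Mxx t x), r⟫) x := by
        intro x _
        have h1 := HasDerivAt.inner (𝕜 := ℝ)
          ((hmx t x).cross3' (hmxx t x)) (hasDerivAt_const x r)
        simpa [cross3_self, inner_zero_right] using h1
      rw [integral_eq_sub_of_hasDerivAt hq ((ccr.inner continuous_const).intervalIntegrable _ _)]
      rw [hMx0, hMxL, cross3_zero_right, cross3_zero_right, inner_zero_left, sub_zero]
    -- IBP 3 : ∫ (⟪m,Mxx⟫⟪m,r⟫ - ⟪m,m⟫⟪Mxx,r⟫) = ∫ (⟪m,Mx⟫⟪Mx,r⟫ - ⟪Mx,Mx⟫⟪m,r⟫)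
    have dmm : ∀ x : ℝ, HasDerivAt (fun y => ⟪m t y, m t y⟫) (2 * ⟪m t x, Mx t x⟫) x := by
      intro x
      have h := HasDerivAt.inner (𝕜 := ℝ) (hmx t x) (hmx t x)
      refine h.congr_deriv ?_
      rw [real_inner_comm]; ring
    have dmMx : ∀ x : ℝ, HasDerivAt (fun y => ⟪m t y, Mx t y⟫)
        (⟪m t x, Mxx t x⟫ + ⟪Mx t x, Mx t x⟫) x :=
      fun x => HasDerivAt.inner (𝕜 := ℝ) (hmx t x) (hmxx t x)
    have dmr : ∀ x : ℝ, HasDerivAt (fun y => ⟪m t y, r⟫) (⟪Mx t x, r⟫) x := by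
      intro x
      simpa [inner_zero_right] using
        HasDerivAt.inner (𝕜 := ℝ) (hmx t x) (hasDerivAt_const x r)
    have dMxr : ∀ x : ℝ, HasDerivAt (fun y => ⟪Mx t y, r⟫) (⟪Mxx t x, r⟫) x := by
      intro x
      simpa [inner_zero_right] using
        HasDerivAt.inner (𝕜 := ℝ) (hmxx t x) (hasDerivAt_const x r)
    have ibp3 : (∫ x in (0:ℝ)..L,
          ((⟪m t x, Mxx t x⟫ * ⟪m t x, r⟫ - ⟪m t x, m t x⟫ * ⟪Mxx t x, r⟫)
            + (⟪Mx t x, Mx t x⟫ * ⟪m t x, r⟫ - ⟪m t x, Mx t x⟫ * ⟪Mx t x, r⟫))) = 0 := by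
      have hq : ∀ x ∈ Set.uIcc (0:ℝ) L, HasDerivAt
          (fun y => ⟪m t y, Mx t y⟫ * ⟪m t y, r⟫ - ⟪m t y, m t y⟫ * ⟪Mx t y, r⟫)
          ((⟪m t x, Mxx t x⟫ * ⟪m t x, r⟫ - ⟪m t x, m t x⟫ * ⟪Mxx t x, r⟫)
            + (⟪Mx t x, Mx t x⟫ * ⟪m t x, r⟫ - ⟪m t x, Mx t x⟫ * ⟪Mx t x, r⟫)) x := by
        intro x _
        have h := (((dmMx x).mul (dmr x)).sub ((dmm x).mul (dMxr x)))
        refine h.congr_deriv ?_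
        ring
      rw [integral_eq_sub_of_hasDerivAt hq]
      · rw [hMx0, hMxL]
        simp [inner_zero_right, inner_zero_left]
      · apply Continuous.intervalIntegrable
        exact (((ca.inner cw).mul (ca.inner continuous_const)).sub
            ((ca.inner ca).mul (cw.inner continuous_const))).add
          (((cu.inner cu).mul (ca.inner continuous_const)).sub
            ((ca.inner cu).mul (cu.inner continuous_const)))
    -- IBP 4 : ∫ ⟪m - r, Mxx⟫ = - I1
    have ibp4 : (∫ x in (0:ℝ)..L, (⟪m t x - r, Mxx t x⟫ + ⟪Mx t x, Mx t x⟫)) = 0 := by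
      have hq : ∀ x ∈ Set.uIcc (0:ℝ) L, HasDerivAt (fun y => ⟪m t y - r, Mx t y⟫)
          (⟪m t x - r, Mxx t x⟫ + ⟪Mx t x, Mx t x⟫) x := by
        intro x _
        exact HasDerivAt.inner (𝕜 := ℝ) ((hmx t x).sub_const r) (hmxx t x)
      rw [integral_eq_sub_of_hasDerivAt hq
        ((((ca.sub continuous_const).inner cw).add (cu.inner cu)).intervalIntegrable _ _)]
      rw [hMx0, hMxL, inner_zero_right, inner_zero_right, sub_zero]
    -- Poincaré bound
    have hpoin : ∀ y ∈ Set.Icc (0:ℝ) L, ‖cross3 (m t y) (Mx t y)‖ ≤ A := by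
      intro y hy
      have hftc : (∫ x in (0:ℝ)..y, cross3 (m t x) (Mxx t x))
          = cross3 (m t y) (Mx t y) - cross3 (m t 0) (Mx t 0) := by
        apply integral_eq_sub_of_hasDerivAt
        · intro x _
          have h1 := (hmx t x).cross3' (hmxx t x)
          simpa [cross3_self, zero_add] using h1
        · exact ccr.intervalIntegrable _ _
      rw [hMx0, cross3_zero_right, sub_zero] at hftc
      calc ‖cross3 (m t y) (Mx t y)‖ = ‖∫ x in (0:ℝ)..y, cross3 (m t x) (Mxx t x)‖ := by
            rw [hftc]
        _ ≤ ∫ x in (0:ℝ)..y, ‖cross3 (m t x) (Mxx t x)‖ :=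
            intervalIntegral.norm_integral_le_integral_norm hy.1
        _ ≤ A := by
            apply intervalIntegral.integral_mono_interval le_rfl hy.1 hy.2
            · exact ae_of_all _ (fun x => norm_nonneg _)
            · exact ccr.norm.intervalIntegrable _ _
    have hA2 : A ^ 2 ≤ L * J := integral_sq_cs hL ccr.norm
    have hA0 : 0 ≤ A := intervalIntegral.integral_nonneg hL0 (fun x _ => norm_nonneg _)
    -- bound on S₁ := ∫ (⟪m,Mx⟫⟪Mx,r⟫ - ⟪Mx,Mx⟫⟪m,r⟫)
    have hS1 : (∫ x in (0:ℝ)..L, (⟪m t x, Mx t x⟫ * ⟪Mx t x, r⟫ - ⟪Mx t x, Mx t x⟫ * ⟪m t x, r⟫))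
        ≤ J + L ^ 2 / 4 * I1 := by
      have hpt : ∀ x ∈ Set.Icc (0:ℝ) L,
          ⟪m t x, Mx t x⟫ * ⟪Mx t x, r⟫ - ⟪Mx t x, Mx t x⟫ * ⟪m t x, r⟫
            ≤ A ^ 2 / L ^ 2 + L ^ 2 / 4 * ‖Mx t x‖ ^ 2 := by
        intro x hx
        have h1 : ⟪m t x, Mx t x⟫ * ⟪Mx t x, r⟫ - ⟪Mx t x, Mx t x⟫ * ⟪m t x, r⟫
            = -⟪cross3 (m t x) (Mx t x), cross3 r (Mx t x)⟫ := lagrange _ _ _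
        have h2 : |⟪cross3 (m t x) (Mx t x), cross3 r (Mx t x)⟫|
            ≤ ‖cross3 (m t x) (Mx t x)‖ * ‖cross3 r (Mx t x)‖ := abs_real_inner_le_norm _ _
        have h3 : ‖cross3 r (Mx t x)‖ ≤ ‖Mx t x‖ := by
          have := cross3_norm_le r (Mx t x)
          rwa [hr, one_mul] at this
        have h4 : ‖cross3 (m t x) (Mx t x)‖ ≤ A := hpoin x hx
        have h5 : ‖cross3 (m t x) (Mx t x)‖ * ‖cross3 r (Mx t x)‖ ≤ A * ‖Mx t x‖ :=
          mul_le_mul h4 h3 (norm_nonneg _) hA0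
        have h6 : A * ‖Mx t x‖ ≤ A ^ 2 / L ^ 2 + L ^ 2 / 4 * ‖Mx t x‖ ^ 2 := by
          have hsq : 0 ≤ (A / L - L / 2 * ‖Mx t x‖) ^ 2 := sq_nonneg _
          have hLne : (L:ℝ) ≠ 0 := ne_of_gt hL
          have hexp : (A / L - L / 2 * ‖Mx t x‖) ^ 2
              = A ^ 2 / L ^ 2 - A * ‖Mx t x‖ + L ^ 2 / 4 * ‖Mx t x‖ ^ 2 := by
            field_simp
            ring
          nlinarith [hsq, hexp]
        calc ⟪m t x, Mx t x⟫ * ⟪Mx t x, r⟫ - ⟪Mx t x, Mx t x⟫ * ⟪m t x, r⟫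
            = -⟪cross3 (m t x) (Mx t x), cross3 r (Mx t x)⟫ := h1
          _ ≤ |⟪cross3 (m t x) (Mx t x), cross3 r (Mx t x)⟫| := neg_le_abs _
          _ ≤ A * ‖Mx t x‖ := le_trans h2 h5
          _ ≤ A ^ 2 / L ^ 2 + L ^ 2 / 4 * ‖Mx t x‖ ^ 2 := h6
      have hmono := intervalIntegral.integral_mono_on (μ := MeasureTheory.volume) hL0
        ((((ca.inner cu).mul (cu.inner continuous_const)).sub
          ((cu.inner cu).mul (ca.inner continuous_const))).intervalIntegrable _ _)
        ((continuous_const.add (continuous_const.mul (cu.norm.pow 2))).intervalIntegrable _ _)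
        hpt
      have hval : (∫ x in (0:ℝ)..L, (A ^ 2 / L ^ 2 + L ^ 2 / 4 * ‖Mx t x‖ ^ 2))
          = L * (A ^ 2 / L ^ 2) + L ^ 2 / 4 * I1 := by
        rw [intervalIntegral.integral_add (f := fun _ => A ^ 2 / L ^ 2)
          (g := fun x => L ^ 2 / 4 * ‖Mx t x‖ ^ 2) intervalIntegrable_const
          ((continuous_const.mul (cu.norm.pow 2)).intervalIntegrable _ _),
          intervalIntegral.integral_const, intervalIntegral.integral_const_mul]
        simp [smul_eq_mul, hI1def]
      have hcmp : L * (A ^ 2 / L ^ 2) + L ^ 2 / 4 * I1 ≤ J + L ^ 2 / 4 * I1 := by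
        have : L * (A ^ 2 / L ^ 2) = A ^ 2 / L := by field_simp
        rw [this]
        have h7 : A ^ 2 / L ≤ J := by
          rw [div_le_iff₀ hL]
          calc A ^ 2 ≤ L * J := hA2
            _ = J * L := mul_comm _ _
        linarith
      calc (∫ x in (0:ℝ)..L, (⟪m t x, Mx t x⟫ * ⟪Mx t x, r⟫ - ⟪Mx t x, Mx t x⟫ * ⟪m t x, r⟫))
          ≤ ∫ x in (0:ℝ)..L, (A ^ 2 / L ^ 2 + L ^ 2 / 4 * ‖Mx t x‖ ^ 2) := hmono
        _ = L * (A ^ 2 / L ^ 2) + L ^ 2 / 4 * I1 := hval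
        _ ≤ J + L ^ 2 / 4 * I1 := hcmp
    -- rewrite first integral using symmetry of second derivatives and IBP1
    have hsymmint : (∫ x in (0:ℝ)..L, 2 * ⟪Mtx t x, Mx t x⟫)
        = -∫ x in (0:ℝ)..L, 2 * ⟪Mt t x, Mxx t x⟫ := by
      have h1 : (∫ x in (0:ℝ)..L, 2 * ⟪Mtx t x, Mx t x⟫)
          = ∫ x in (0:ℝ)..L, 2 * ⟪Mxt t x, Mx t x⟫ := by
        apply intervalIntegral.integral_congr
        intro x _
        show 2 * ⟪Mtx t x, Mx t x⟫ = 2 * ⟪Mxt t x, Mx t x⟫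
        rw [hsymm]
      rw [h1]
      have h2 : (∫ x in (0:ℝ)..L, (⟪Mt t x, Mxx t x⟫ + ⟪Mxt t x, Mx t x⟫))
          = (∫ x in (0:ℝ)..L, ⟪Mt t x, Mxx t x⟫) + ∫ x in (0:ℝ)..L, ⟪Mxt t x, Mx t x⟫ :=
        intervalIntegral.integral_add ((cmt.inner cw).intervalIntegrable _ _)
          ((cmxt.inner cu).intervalIntegrable _ _)
      rw [h2] at ibp1
      rw [intervalIntegral.integral_const_mul, intervalIntegral.integral_const_mul]
      linarith
    -- main substitution
    have hmain : (∫ x in (0:ℝ)..L, 2 * ⟪Mt t x, m t x - r⟫)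
          - (∫ x in (0:ℝ)..L, 2 * ⟪Mt t x, Mxx t x⟫)
        = 2 * ∫ x in (0:ℝ)..L,
            (-⟪cross3 (m t x) (Mxx t x), r⟫
              - ν * ‖cross3 (m t x) (Mxx t x)‖ ^ 2
              + ν * (⟪m t x, Mxx t x⟫ * ⟪m t x, r⟫ - ‖m t x‖ ^ 2 * ⟪Mxx t x, r⟫)
              - k * ‖m t x - r‖ ^ 2 + k * ⟪m t x - r, Mxx t x⟫) := by
      rw [intervalIntegral.integral_const_mul, intervalIntegral.integral_const_mul]
      rw [← mul_sub]
      congr 1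
      rw [← intervalIntegral.integral_sub ((cmt.inner (ca.sub continuous_const)).intervalIntegrable _ _)
        ((cmt.inner cw).intervalIntegrable _ _)]
      apply intervalIntegral.integral_congr
      intro x hx
      show ⟪Mt t x, m t x - r⟫ - ⟪Mt t x, Mxx t x⟫
          = -⟪cross3 (m t x) (Mxx t x), r⟫
            - ν * ‖cross3 (m t x) (Mxx t x)‖ ^ 2
            + ν * (⟪m t x, Mxx t x⟫ * ⟪m t x, r⟫ - ‖m t x‖ ^ 2 * ⟪Mxx t x, r⟫)
            - k * ‖m t x - r‖ ^ 2 + k * ⟪m t x - r, Mxx t x⟫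
      have hx' : x ∈ Set.Icc (0:ℝ) L := huIcc ▸ hx
      have hMt : Mt t x = cross3 (m t x) (Mxx t x)
          - ν • cross3 (m t x) (cross3 (m t x) (Mxx t x)) + k • (r - m t x) := by
        rw [← (hmt t x).deriv, hpde t x ht hx', hmxxeq]
      rw [← inner_sub_right, hMt]
      exact Pident ν k (m t x) (Mxx t x) r
    -- split the big integral
    have hsplit : (∫ x in (0:ℝ)..L,
            (-⟪cross3 (m t x) (Mxx t x), r⟫
              - ν * ‖cross3 (m t x) (Mxx t x)‖ ^ 2
              + ν * (⟪m t x, Mxx t x⟫ * ⟪m t x, r⟫ - ‖m t x‖ ^ 2 * ⟪Mxx t x, r⟫)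
              - k * ‖m t x - r‖ ^ 2 + k * ⟪m t x - r, Mxx t x⟫))
        = -(∫ x in (0:ℝ)..L, ⟪cross3 (m t x) (Mxx t x), r⟫)
          - ν * J
          + ν * (∫ x in (0:ℝ)..L, (⟪m t x, Mxx t x⟫ * ⟪m t x, r⟫ - ‖m t x‖ ^ 2 * ⟪Mxx t x, r⟫))
          - k * I2 + k * ∫ x in (0:ℝ)..L, ⟪m t x - r, Mxx t x⟫ := by
      have i0 : IntervalIntegrable (fun x => ⟪cross3 (m t x) (Mxx t x), r⟫) volume 0 L :=
        (ccr.inner continuous_const).intervalIntegrable _ _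
      have i0n : IntervalIntegrable (fun x => -⟪cross3 (m t x) (Mxx t x), r⟫) volume 0 L :=
        ((ccr.inner continuous_const).neg).intervalIntegrable _ _
      have i1 : IntervalIntegrable (fun x => ‖cross3 (m t x) (Mxx t x)‖ ^ 2) volume 0 L :=
        (ccr.norm.pow 2).intervalIntegrable _ _
      have i2 : IntervalIntegrable
          (fun x => ⟪m t x, Mxx t x⟫ * ⟪m t x, r⟫ - ‖m t x‖ ^ 2 * ⟪Mxx t x, r⟫) volume 0 L :=
        (((ca.inner cw).mul (ca.inner continuous_const)).sub
          ((ca.norm.pow 2).mul (cw.inner continuous_const))).intervalIntegrable _ _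
      have i3 : IntervalIntegrable (fun x => ‖m t x - r‖ ^ 2) volume 0 L :=
        (((ca.sub continuous_const).norm.pow 2)).intervalIntegrable _ _
      have i4 : IntervalIntegrable (fun x => ⟪m t x - r, Mxx t x⟫) volume 0 L :=
        ((ca.sub continuous_const).inner cw).intervalIntegrable _ _
      rw [show (fun x => (-⟪cross3 (m t x) (Mxx t x), r⟫
              - ν * ‖cross3 (m t x) (Mxx t x)‖ ^ 2
              + ν * (⟪m t x, Mxx t x⟫ * ⟪m t x, r⟫ - ‖m t x‖ ^ 2 * ⟪Mxx t x, r⟫)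
              - k * ‖m t x - r‖ ^ 2 + k * ⟪m t x - r, Mxx t x⟫))
          = fun x => ((((-⟪cross3 (m t x) (Mxx t x), r⟫
              - ν * ‖cross3 (m t x) (Mxx t x)‖ ^ 2)
              + ν * (⟪m t x, Mxx t x⟫ * ⟪m t x, r⟫ - ‖m t x‖ ^ 2 * ⟪Mxx t x, r⟫))
              - k * ‖m t x - r‖ ^ 2) + k * ⟪m t x - r, Mxx t x⟫) from rfl]
      rw [intervalIntegral.integral_add (((i0n.sub (i1.const_mul ν)).add
          (i2.const_mul ν)).sub (i3.const_mul k)) (i4.const_mul k)]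
      rw [intervalIntegral.integral_sub ((i0n.sub (i1.const_mul ν)).add (i2.const_mul ν))
        (i3.const_mul k)]
      rw [intervalIntegral.integral_add (i0n.sub (i1.const_mul ν)) (i2.const_mul ν)]
      rw [intervalIntegral.integral_sub i0n (i1.const_mul ν)]
      rw [intervalIntegral.integral_neg, intervalIntegral.integral_const_mul,
        intervalIntegral.integral_const_mul, intervalIntegral.integral_const_mul,
        intervalIntegral.integral_const_mul]
    -- convert the ν-term via IBP3
    have hnu : (∫ x in (0:ℝ)..L, (⟪m t x, Mxx t x⟫ * ⟪m t x, r⟫ - ‖m t x‖ ^ 2 * ⟪Mxx t x, r⟫))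
        = ∫ x in (0:ℝ)..L, (⟪m t x, Mx t x⟫ * ⟪Mx t x, r⟫ - ⟪Mx t x, Mx t x⟫ * ⟪m t x, r⟫) := by
      have e1 : (∫ x in (0:ℝ)..L, (⟪m t x, Mxx t x⟫ * ⟪m t x, r⟫ - ‖m t x‖ ^ 2 * ⟪Mxx t x, r⟫))
          = ∫ x in (0:ℝ)..L, (⟪m t x, Mxx t x⟫ * ⟪m t x, r⟫ - ⟪m t x, m t x⟫ * ⟪Mxx t x, r⟫) := by
        apply intervalIntegral.integral_congr
        intro x _
        show ⟪m t x, Mxx t x⟫ * ⟪m t x, r⟫ - ‖m t x‖ ^ 2 * ⟪Mxx t x, r⟫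
            = ⟪m t x, Mxx t x⟫ * ⟪m t x, r⟫ - ⟪m t x, m t x⟫ * ⟪Mxx t x, r⟫
        rw [inner_self3]
      rw [e1]
      have h2 : (∫ x in (0:ℝ)..L,
            ((⟪m t x, Mxx t x⟫ * ⟪m t x, r⟫ - ⟪m t x, m t x⟫ * ⟪Mxx t x, r⟫)
              + (⟪Mx t x, Mx t x⟫ * ⟪m t x, r⟫ - ⟪m t x, Mx t x⟫ * ⟪Mx t x, r⟫)))
          = (∫ x in (0:ℝ)..L, (⟪m t x, Mxx t x⟫ * ⟪m t x, r⟫ - ⟪m t x, m t x⟫ * ⟪Mxx t x, r⟫))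
            + ∫ x in (0:ℝ)..L, (⟪Mx t x, Mx t x⟫ * ⟪m t x, r⟫ - ⟪m t x, Mx t x⟫ * ⟪Mx t x, r⟫) :=
        intervalIntegral.integral_add
          ((((ca.inner cw).mul (ca.inner continuous_const)).sub
            ((ca.inner ca).mul (cw.inner continuous_const))).intervalIntegrable _ _)
          ((((cu.inner cu).mul (ca.inner continuous_const)).sub
            ((ca.inner cu).mul (cu.inner continuous_const))).intervalIntegrable _ _)
      rw [h2] at ibp3
      have h3 : (∫ x in (0:ℝ)..L, (⟪m t x, Mx t x⟫ * ⟪Mx t x, r⟫ - ⟪Mx t x, Mx t x⟫ * ⟪m t x, r⟫))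
          = -∫ x in (0:ℝ)..L, (⟪Mx t x, Mx t x⟫ * ⟪m t x, r⟫ - ⟪m t x, Mx t x⟫ * ⟪Mx t x, r⟫) := by
        rw [← intervalIntegral.integral_neg]
        apply intervalIntegral.integral_congr
        intro x _
        show ⟪m t x, Mx t x⟫ * ⟪Mx t x, r⟫ - ⟪Mx t x, Mx t x⟫ * ⟪m t x, r⟫
            = -(⟪Mx t x, Mx t x⟫ * ⟪m t x, r⟫ - ⟪m t x, Mx t x⟫ * ⟪Mx t x, r⟫)
        ring
      rw [h3]
      linarith
    -- convert the k-term via IBP4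
    have hkterm : (∫ x in (0:ℝ)..L, ⟪m t x - r, Mxx t x⟫) = -I1 := by
      have h2 : (∫ x in (0:ℝ)..L, (⟪m t x - r, Mxx t x⟫ + ⟪Mx t x, Mx t x⟫))
          = (∫ x in (0:ℝ)..L, ⟪m t x - r, Mxx t x⟫) + ∫ x in (0:ℝ)..L, ⟪Mx t x, Mx t x⟫ :=
        intervalIntegral.integral_add
          (((ca.sub continuous_const).inner cw).intervalIntegrable _ _)
          ((cu.inner cu).intervalIntegrable _ _)
      rw [h2] at ibp4
      have h3 : (∫ x in (0:ℝ)..L, ⟪Mx t x, Mx t x⟫) = I1 := by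
        apply intervalIntegral.integral_congr
        intro x _
        show ⟪Mx t x, Mx t x⟫ = ‖Mx t x‖ ^ 2
        exact inner_self3 _
      rw [h3] at ibp4
      linarith
    -- put everything together
    have hEE : EE t = I1 + I2 := rfl
    rw [hsymmint, hEE]
    rw [show ((-∫ x in (0:ℝ)..L, 2 * ⟪Mt t x, Mxx t x⟫) + ∫ x in (0:ℝ)..L, 2 * ⟪Mt t x, m t x - r⟫)
        = (∫ x in (0:ℝ)..L, 2 * ⟪Mt t x, m t x - r⟫) - ∫ x in (0:ℝ)..L, 2 * ⟪Mt t x, Mxx t x⟫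
        from by ring]
    rw [hmain, hsplit, ibp2, hnu, hkterm]
    have hcle : ν * (J + L ^ 2 / 4 * I1) - ν * J - k * I2 - k * I1 ≤ -c * (I1 + I2) := by
      rw [hcdef]
      nlinarith [hν, hI10, hI20, sq_nonneg L, hL, mul_nonneg hν hI10, mul_nonneg hν hI20,
        mul_nonneg (mul_nonneg hν (sq_nonneg L)) hI10, mul_nonneg (mul_nonneg hν (sq_nonneg L)) hI20]
    have hSle : ν * (∫ x in (0:ℝ)..L,
          (⟪m t x, Mx t x⟫ * ⟪Mx t x, r⟫ - ⟪Mx t x, Mx t x⟫ * ⟪m t x, r⟫))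
        ≤ ν * (J + L ^ 2 / 4 * I1) := mul_le_mul_of_nonneg_left hS1 hν
    nlinarith [hSle, hcle]
  -- Grönwall
  have hphi : ∀ t : ℝ, HasDerivAt (fun s => Real.exp (2 * c * s) * EE s)
      (2 * c * Real.exp (2 * c * t) * EE t
        + Real.exp (2 * c * t) * ((∫ x in (0:ℝ)..L, 2 * ⟪Mtx t x, Mx t x⟫)
          + ∫ x in (0:ℝ)..L, 2 * ⟪Mt t x, m t x - r⟫)) t := by
    intro t
    have he : HasDerivAt (fun s : ℝ => Real.exp (2 * c * s)) (2 * c * Real.exp (2 * c * t)) t := by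
      have h1 : HasDerivAt (fun s : ℝ => 2 * c * s) (2 * c) t := by
        simpa using (hasDerivAt_id t).const_mul (2 * c)
      have := h1.exp
      convert this using 1 <;> ring
    have := he.mul (hEE' t)
    exact this.congr_deriv (by ring)
  have hanti : AntitoneOn (fun s => Real.exp (2 * c * s) * EE s) (Set.Ici (0:ℝ)) := by
    apply antitoneOn_of_deriv_nonpos (convex_Ici 0)
    · exact fun s _ => ((hphi s).continuousAt.continuousWithinAt)
    · intro s hs
      exact (hphi s).differentiableAt.differentiableWithinAt
    · intro s hs
      rw [interior_Ici] at hs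
      rw [(hphi s).deriv]
      have h1 := hkey s (le_of_lt hs)
      have h2 : (0:ℝ) < Real.exp (2 * c * s) := Real.exp_pos _
      nlinarith [h1, h2]
  intro t ht
  have hmono := hanti (Set.self_mem_Ici) (Set.mem_Ici.2 ht) ht
  simp only [mul_zero, Real.exp_zero, one_mul] at hmono
  -- conclude
  have hgoal1 : (fun x => ‖deriv (m t) x‖ ^ 2) = fun x => ‖Mx t x‖ ^ 2 :=
    funext fun x => by rw [hderiv]
  have hgoal0 : (fun x => ‖deriv (m 0) x‖ ^ 2) = fun x => ‖Mx 0 x‖ ^ 2 :=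
    funext fun x => by rw [hderiv]
  rw [hgoal1, hgoal0]
  have hE : EE t ≤ Real.exp (-(2 * c * t)) * EE 0 := by
    have h2 : (0:ℝ) < Real.exp (2 * c * t) := Real.exp_pos _
    rw [Real.exp_neg]
    calc EE t = (Real.exp (2 * c * t))⁻¹ * (Real.exp (2 * c * t) * EE t) := by field_simp
      _ ≤ (Real.exp (2 * c * t))⁻¹ * EE 0 := mul_le_mul_of_nonneg_left hmono (by positivity)
  calc (∫ x in (0:ℝ)..L, ‖Mx t x‖ ^ 2) + ∫ x in (0:ℝ)..L, ‖m t x - r‖ ^ 2 = EE t := rfl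
    _ ≤ Real.exp (-(2 * c * t)) * EE 0 := hE
    _ = Real.exp (-2 * (k - 2 * ν * L ^ 2) * t)
        * ((∫ x in (0:ℝ)..L, ‖Mx 0 x‖ ^ 2) + ∫ x in (0:ℝ)..L, ‖m 0 x - r‖ ^ 2) := by
      rw [hcdef]; ring_nf; rw [← mul_add]
end

section
/- Let L > 0, ν ≥ 0, k > 0, let a, r ∈ ℝ³ with ‖a‖₂ = 1, and let z : [0,∞) × [0,L] → ℝ³ be twice continuously differentiable in (t,x), satisfy the controlled linearized Landau–Lifshitz equation ∂z/∂t = ν z_xx + a × z_xx + k(r − z) on [0,∞) × [0,L], with Neumann boundary conditions z_x(t,0) = z_x(t,L) = 0 for all t ≥ 0. Then for all t ≥ 0, ∫₀ᴸ ‖z(t,x) − r‖₂² dx ≤ e^{−2kt} ∫₀ᴸ ‖z(0,x) − r‖₂² dx; in particular r is an exponentially stable equilibrium of the controlled linearized equation in the L²-norm. (The paper's Theorem 3.9.) -/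
open scoped RealInnerProductSpace


/-- Second spatial derivative `z_xx` of `z(t, x)`. -/
noncomputable def zxx (z : ℝ → ℝ → EuclideanSpace ℝ (Fin 3)) (t x : ℝ) :
    EuclideanSpace ℝ (Fin 3) :=
  deriv (deriv (z t)) x

set_option linter.unusedVariables false in
noncomputable def crossCLM (a : EuclideanSpace ℝ (Fin 3)) :
    EuclideanSpace ℝ (Fin 3) →L[ℝ] EuclideanSpace ℝ (Fin 3) :=
  LinearMap.toContinuousLinearMap
  { toFun := fun v => cross3 a v
    map_add' := by
      intro u v
      ext i
      fin_cases i <;>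
        simp [cross3, WithLp.equiv_symm_apply, PiLp.toLp_apply, PiLp.add_apply] <;> ring
    map_smul' := by
      intro c v
      ext i
      fin_cases i <;>
        simp [cross3, WithLp.equiv_symm_apply, PiLp.toLp_apply, PiLp.smul_apply, smul_eq_mul] <;> ring }

lemma crossCLM_apply (a v : EuclideanSpace ℝ (Fin 3)) : crossCLM a v = cross3 a v := rfl

lemma inner_cross3_self (a v : EuclideanSpace ℝ (Fin 3)) : ⟪v, cross3 a v⟫ = 0 := by
  simp [cross3, PiLp.inner_apply, RCLike.inner_apply, conj_trivial, Fin.sum_univ_three,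
    WithLp.equiv_symm_apply, PiLp.toLp_apply]
  ring

lemma cross3_zero (a : EuclideanSpace ℝ (Fin 3)) : cross3 a 0 = 0 := by
  rw [← crossCLM_apply]; exact map_zero _


/-- Theorem 3.9: Along C² solutions of the controlled linearized
Landau–Lifshitz equation `∂z/∂t = ν z_xx + a × z_xx + k(r − z)` with Neumann boundary
conditions on `[0, L]`, `‖a‖ = 1` and gain `k > 0`, the L²-distance to `r` decays
exponentially: `∫₀ᴸ ‖z(t,x) − r‖² dx ≤ e^{−2kt} ∫₀ᴸ ‖z(0,x) − r‖² dx` for all `t ≥ 0`. -/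
theorem controlled_linearized_landau_lifshitz_exponential_stability
    (L ν k : ℝ) (hL : 0 < L) (hν : 0 ≤ ν) (hk : 0 < k)
    (a r : EuclideanSpace ℝ (Fin 3)) (ha : ‖a‖ = 1)
    (z : ℝ → ℝ → EuclideanSpace ℝ (Fin 3))
    (hsmooth : ContDiff ℝ 2 (fun p : ℝ × ℝ => z p.1 p.2))
    (hpde : ∀ t x : ℝ, 0 ≤ t → x ∈ Set.Icc (0 : ℝ) L →
      deriv (fun s => z s x) t
        = ν • zxx z t x + cross3 a (zxx z t x) + k • (r - z t x))
    (hbc : ∀ t : ℝ, 0 ≤ t → deriv (z t) 0 = 0 ∧ deriv (z t) L = 0) :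
    ∀ t : ℝ, 0 ≤ t →
      ∫ x in (0 : ℝ)..L, ‖z t x - r‖ ^ 2
        ≤ Real.exp (-2 * k * t) * ∫ x in (0 : ℝ)..L, ‖z 0 x - r‖ ^ 2 := by
  -- time partial derivative
  set zt : ℝ → ℝ → EuclideanSpace ℝ (Fin 3) :=
    fun t x => fderiv ℝ (fun p : ℝ × ℝ => z p.1 p.2) (t, x) ((1 : ℝ), (0 : ℝ)) with hzt_def
  have hzt : ∀ t x : ℝ, HasDerivAt (fun s => z s x) (zt t x) t := by
    intro t x
    have hd : HasFDerivAt (fun p : ℝ × ℝ => z p.1 p.2)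
        (fderiv ℝ (fun p : ℝ × ℝ => z p.1 p.2) (t, x)) (t, x) :=
      ((hsmooth.differentiable (by norm_num)) (t, x)).hasFDerivAt
    have hγ : HasDerivAt (fun s : ℝ => (s, x)) ((1 : ℝ), (0 : ℝ)) t :=
      (hasDerivAt_id t).prodMk (hasDerivAt_const t x)
    exact hd.comp_hasDerivAt t hγ
  have hztc : Continuous fun p : ℝ × ℝ => zt p.1 p.2 := by
    have h1 : Continuous (fderiv ℝ (fun p : ℝ × ℝ => z p.1 p.2)) :=
      hsmooth.continuous_fderiv (by norm_num)
    exact h1.clm_apply continuous_const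
  have hzc : Continuous fun p : ℝ × ℝ => z p.1 p.2 := hsmooth.continuous
  -- spatial regularity at fixed t
  have hz2 : ∀ t : ℝ, ContDiff ℝ 2 (z t) := by
    intro t
    exact hsmooth.comp ((contDiff_const.prodMk contDiff_id) : ContDiff ℝ 2 fun x : ℝ => (t, x))
  have hcd1 : ∀ t : ℝ, ContDiff ℝ 1 (deriv (z t)) := by
    intro t
    have h := (hz2 t).of_le (le_refl 2)
    have h2 : ContDiff ℝ ((1 : ℕ) + 1) (z t) := by exact_mod_cast h
    exact (contDiff_succ_iff_deriv.mp h2).2.2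
  have hd1 : ∀ t : ℝ, Differentiable ℝ (z t) := fun t => (hz2 t).differentiable (by norm_num)
  have hv_diff : ∀ t : ℝ, Differentiable ℝ (deriv (z t)) :=
    fun t => (hcd1 t).differentiable one_ne_zero
  have hv_cont : ∀ t : ℝ, Continuous (deriv (z t)) := fun t => (hv_diff t).continuous
  have hvv_cont : ∀ t : ℝ, Continuous (zxx z t) := fun t => (hcd1 t).continuous_deriv le_rfl
  -- the energy and its derivative
  set F : ℝ → ℝ := fun t => ∫ x in (0 : ℝ)..L, ‖z t x - r‖ ^ 2 with hF_def
  set F' : ℝ → ℝ := fun t => ∫ x in (0 : ℝ)..L, 2 * ⟪z t x - r, zt t x⟫ with hF'_def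
  have hderiv_sq : ∀ t x : ℝ, HasDerivAt (fun s => ‖z s x - r‖ ^ 2)
      (2 * ⟪z t x - r, zt t x⟫) t := by
    intro t x
    have hw : HasDerivAt (fun s => z s x - r) (zt t x) t := (hzt t x).sub_const r
    have h2 := hw.inner ℝ hw
    simp only [real_inner_self_eq_norm_sq] at h2
    refine h2.congr_deriv ?_
    rw [real_inner_comm (zt t x)]
    ring
  have hFcont : ∀ t : ℝ, Continuous fun x => ‖z t x - r‖ ^ 2 := by
    intro t
    have : Continuous (z t) := (hd1 t).continuous
    exact ((this.sub continuous_const).norm).pow 2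
  have hF'integrand_cont : Continuous fun p : ℝ × ℝ => 2 * ⟪z p.1 p.2 - r, zt p.1 p.2⟫ := by
    exact continuous_const.mul ((hzc.sub continuous_const).inner hztc)
  have hF : ∀ t : ℝ, HasDerivAt F (F' t) t := by
    intro t₀
    have key := intervalIntegral.hasDerivAt_integral_of_dominated_loc_of_deriv_le
      (F := fun s x => ‖z s x - r‖ ^ 2)
      (F' := fun s x => 2 * ⟪z s x - r, zt s x⟫)
      (a := (0 : ℝ)) (b := L) (μ := MeasureTheory.volume)
      (bound := fun _ => sSup ((fun p : ℝ × ℝ => ‖2 * ⟪z p.1 p.2 - r, zt p.1 p.2⟫‖) ''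
        (Set.Icc (t₀ - 1) (t₀ + 1) ×ˢ Set.uIcc (0 : ℝ) L)) )
      (x₀ := t₀) (s := Metric.ball t₀ 1) (Metric.ball_mem_nhds t₀ one_pos) ?_ ?_ ?_ ?_ ?_ ?_
    · exact key.2
    · exact Filter.Eventually.of_forall fun s => (hFcont s).aestronglyMeasurable
    · exact (hFcont t₀).intervalIntegrable _ _
    · exact (continuous_const.mul
        (((hd1 t₀).continuous.sub continuous_const).inner (hztc.comp
          (continuous_const.prodMk continuous_id)))).aestronglyMeasurable
    · apply MeasureTheory.ae_of_all
      intro x hx s hs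
      apply le_csSup
      · apply IsCompact.bddAbove
        apply IsCompact.image
        · exact (isCompact_Icc.prod isCompact_uIcc)
        · exact hF'integrand_cont.norm
      · refine ⟨(s, x), ⟨?_, ?_⟩, rfl⟩
        · have := Metric.mem_ball.mp hs
          rw [Real.dist_eq] at this
          constructor <;> [linarith [abs_lt.mp this]; linarith [(abs_lt.mp this).2]]
        · exact Set.Ioc_subset_Icc_self hx
    · exact intervalIntegrable_const
    · exact MeasureTheory.ae_of_all _ fun x _ s _ => hderiv_sq s x
  -- the decay estimate on the derivative
  have hibp : ∀ t : ℝ, 0 ≤ t → F' t ≤ -(2 * k) * F t := by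
    intro t ht
    obtain ⟨hbc0, hbcL⟩ := hbc t ht
    -- FTC pieces
    have hwd : ∀ x : ℝ, HasDerivAt (fun y => z t y - r) (deriv (z t) x) x :=
      fun x => ((hd1 t x).hasDerivAt).sub_const r
    have hvv : ∀ x : ℝ, HasDerivAt (deriv (z t)) (zxx z t x) x :=
      fun x => (hv_diff t x).hasDerivAt
    have hw_cont : Continuous fun x => z t x - r := (hd1 t).continuous.sub continuous_const
    have hiA : IntervalIntegrable (fun x => ⟪z t x - r, zxx z t x⟫)
        MeasureTheory.volume 0 L := (hw_cont.inner (hvv_cont t)).intervalIntegrable _ _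
    have hiV : IntervalIntegrable (fun x => ‖deriv (z t) x‖ ^ 2)
        MeasureTheory.volume 0 L := (((hv_cont t).norm).pow 2).intervalIntegrable _ _
    have hcross_cont : Continuous fun x => cross3 a (zxx z t x) := by
      have := (crossCLM a).continuous.comp (hvv_cont t)
      exact this
    have hiB : IntervalIntegrable (fun x => ⟪z t x - r, cross3 a (zxx z t x)⟫)
        MeasureTheory.volume 0 L := (hw_cont.inner hcross_cont).intervalIntegrable _ _
    have hiW : IntervalIntegrable (fun x => ‖z t x - r‖ ^ 2)
        MeasureTheory.volume 0 L := (hFcont t).intervalIntegrable _ _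
    -- A : integration by parts for the dissipative term
    have hA : (∫ x in (0 : ℝ)..L, ⟪z t x - r, zxx z t x⟫)
        = - ∫ x in (0 : ℝ)..L, ‖deriv (z t) x‖ ^ 2 := by
      have hftc : ∀ x ∈ Set.uIcc (0 : ℝ) L,
          HasDerivAt (fun y => ⟪z t y - r, deriv (z t) y⟫)
            (⟪z t x - r, zxx z t x⟫ + ‖deriv (z t) x‖ ^ 2) x := by
        intro x _
        have h := (hwd x).inner ℝ (hvv x)
        have : ⟪deriv (z t) x, deriv (z t) x⟫ = ‖deriv (z t) x‖ ^ 2 :=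
          real_inner_self_eq_norm_sq _
        rw [this] at h
        exact h
      have hint : IntervalIntegrable
          (fun x => ⟪z t x - r, zxx z t x⟫ + ‖deriv (z t) x‖ ^ 2)
          MeasureTheory.volume 0 L := hiA.add hiV
      have := intervalIntegral.integral_eq_sub_of_hasDerivAt hftc hint
      rw [hbc0, hbcL, inner_zero_right, inner_zero_right, sub_zero] at this
      rw [intervalIntegral.integral_add hiA hiV] at this
      linarith
    -- B : the cross-product term vanishes
    have hB : (∫ x in (0 : ℝ)..L, ⟪z t x - r, cross3 a (zxx z t x)⟫) = 0 := by
      have hftc : ∀ x ∈ Set.uIcc (0 : ℝ) L,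
          HasDerivAt (fun y => ⟪z t y - r, cross3 a (deriv (z t) y)⟫)
            (⟪z t x - r, cross3 a (zxx z t x)⟫) x := by
        intro x _
        have hc : HasDerivAt (fun y => cross3 a (deriv (z t) y)) (cross3 a (zxx z t x)) x := by
          have := (crossCLM a).hasFDerivAt.comp_hasDerivAt x (hvv x)
          exact this
        have h := (hwd x).inner ℝ hc
        rw [inner_cross3_self, add_zero] at h
        exact h
      have := intervalIntegral.integral_eq_sub_of_hasDerivAt hftc hiB
      rw [hbc0, hbcL, cross3_zero, inner_zero_right, inner_zero_right, sub_zero] at this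
      exact this
    -- rewrite F' t using the PDE
    have hFeq : F' t = 2 * ν * (∫ x in (0 : ℝ)..L, ⟪z t x - r, zxx z t x⟫)
        + 2 * (∫ x in (0 : ℝ)..L, ⟪z t x - r, cross3 a (zxx z t x)⟫)
        - 2 * k * F t := by
      have hcongr : ∀ x ∈ Set.uIcc (0 : ℝ) L,
          2 * ⟪z t x - r, zt t x⟫
            = 2 * ν * ⟪z t x - r, zxx z t x⟫
              + 2 * ⟪z t x - r, cross3 a (zxx z t x)⟫
              - 2 * k * ‖z t x - r‖ ^ 2 := by
        intro x hx
        rw [Set.uIcc_of_le hL.le] at hx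
        have hz : zt t x = ν • zxx z t x + cross3 a (zxx z t x) + k • (r - z t x) := by
          rw [← (hzt t x).deriv]
          exact hpde t x ht hx
        rw [hz, inner_add_right, inner_add_right, inner_smul_right, inner_smul_right]
        have : r - z t x = -(z t x - r) := by abel
        rw [this, inner_neg_right, real_inner_self_eq_norm_sq]
        ring
      have h1 : F' t = ∫ x in (0 : ℝ)..L,
          (2 * ν * ⟪z t x - r, zxx z t x⟫
            + 2 * ⟪z t x - r, cross3 a (zxx z t x)⟫
            - 2 * k * ‖z t x - r‖ ^ 2) := by
        rw [hF'_def]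
        exact intervalIntegral.integral_congr hcongr
      rw [h1, intervalIntegral.integral_sub
          ((hiA.const_mul _).add (hiB.const_mul _)) (hiW.const_mul _),
        intervalIntegral.integral_add (hiA.const_mul _) (hiB.const_mul _),
        intervalIntegral.integral_const_mul, intervalIntegral.integral_const_mul,
        intervalIntegral.integral_const_mul]
    have hVnonneg : 0 ≤ ∫ x in (0 : ℝ)..L, ‖deriv (z t) x‖ ^ 2 :=
      intervalIntegral.integral_nonneg hL.le fun x _ => sq_nonneg _
    rw [hFeq, hA, hB]
    nlinarith
  -- Gronwall argument
  have hFd : Differentiable ℝ F := fun t => (hF t).differentiableAt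
  have hG : ∀ t : ℝ, HasDerivAt (fun s => Real.exp (2 * k * s) * F s)
      (Real.exp (2 * k * t) * (2 * k * F t + F' t)) t := by
    intro t
    have h1 : HasDerivAt (fun s : ℝ => 2 * k * s) (2 * k) t := by
      simpa using (hasDerivAt_id t).const_mul (2 * k)
    have h2 := (h1.exp).mul (hF t)
    refine h2.congr_deriv ?_
    ring
  have hanti : AntitoneOn (fun s => Real.exp (2 * k * s) * F s) (Set.Ici 0) := by
    apply antitoneOn_of_deriv_nonpos (convex_Ici 0)
    · exact ((Real.continuous_exp.comp (continuous_const.mul continuous_id)).mul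
        hFd.continuous).continuousOn
    · intro x _
      exact (hG x).differentiableAt.differentiableWithinAt
    · intro x hx
      rw [interior_Ici] at hx
      rw [(hG x).deriv]
      have h := hibp x (le_of_lt hx)
      have h2 : 2 * k * F x + F' x ≤ 0 := by linarith
      exact mul_nonpos_of_nonneg_of_nonpos (Real.exp_nonneg _) h2
  intro t ht
  have h := hanti Set.self_mem_Ici (Set.mem_Ici.mpr ht) ht
  simp only [mul_zero, Real.exp_zero, one_mul] at h
  have hpos : (0 : ℝ) < Real.exp (-2 * k * t) := Real.exp_pos _
  have := mul_le_mul_of_nonneg_left h hpos.le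
  calc (∫ x in (0 : ℝ)..L, ‖z t x - r‖ ^ 2) = F t := rfl
    _ = Real.exp (-2 * k * t) * (Real.exp (2 * k * t) * F t) := by
        rw [← mul_assoc, ← Real.exp_add]
        ring_nf
        simp
    _ ≤ Real.exp (-2 * k * t) * F 0 := this
    _ = Real.exp (-2 * k * t) * ∫ x in (0 : ℝ)..L, ‖z 0 x - r‖ ^ 2 := rfl
end
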